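/- Let H be a group with center Z and let pr : H → H/Z be the canonical projection. Let P and Q be subgroups of H such that pr(P) ⊇ pr(Q). If Q has no nontrivial abelian quotient (equivalently, Q equals its own commutator subgroup), then P ⊇ Q. -/

import Mathlib

open scoped Pointwise
open scoped commutatorElement

/-- Multiplying by central elements does not change commutators. -/
theorem commutator_mul_center_aux {H : Type*} [Group H] (p q : H) {z w : H}
    (hz : z ∈ Subgroup.center H) (hw : w ∈ Subgroup.center H) :
    ⁅p * z, q * w⁆ = ⁅p, q⁆ := by
  have cz : ∀ a : H, z * a = a * z := fun a => (Subgroup.mem_center_iff.mp hz a).symm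
  have cw : ∀ a : H, w * a = a * w := fun a => (Subgroup.mem_center_iff.mp hw a).symm
  simp only [commutatorElement_def, mul_inv_rev]
  calc p * z * (q * w) * (z⁻¹ * p⁻¹) * (w⁻¹ * q⁻¹)
      = p * ((z * (q * w)) * z⁻¹) * (p⁻¹ * (w⁻¹ * q⁻¹)) := by group
    _ = p * ((q * w) * z * z⁻¹) * (p⁻¹ * (w⁻¹ * q⁻¹)) := by rw [cz (q * w)]
    _ = p * q * ((w * p⁻¹) * w⁻¹) * q⁻¹ := by group
    _ = p * q * (p⁻¹ * w * w⁻¹) * q⁻¹ := by rw [cw p⁻¹]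
    _ = p * q * p⁻¹ * q⁻¹ := by group

/-- Let `H` be a group with center `Z` and `pr : H → H/Z` the canonical
projection. Let `P` and `Q` be subgroups of `H` with `pr(P) ⊇ pr(Q)`. If `Q` has no
nontrivial abelian quotient (i.e. `Q` equals its own commutator subgroup), then `P ⊇ Q`. -/
theorem subgroup_le_of_image_in_center_quotient_le {H : Type*} [Group H] (P Q : Subgroup H)
    (hPQ : Subgroup.map (QuotientGroup.mk' (Subgroup.center H)) Q ≤
      Subgroup.map (QuotientGroup.mk' (Subgroup.center H)) P)
    (hQ : commutator ↥Q = ⊤) :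
    Q ≤ P := by
  -- Step 1: Q ≤ P ⊔ center
  have h1 : Q ≤ P ⊔ Subgroup.center H := by
    have := Subgroup.comap_mono (f := QuotientGroup.mk' (Subgroup.center H)) hPQ
    refine le_trans (le_trans (Subgroup.le_comap_map _ Q) this) ?_
    rw [Subgroup.comap_map_eq, QuotientGroup.ker_mk']
  -- Step 2: ⁅Q, Q⁆ ≤ P
  have h2 : ⁅Q, Q⁆ ≤ P := by
    rw [Subgroup.commutator_le]
    intro g hg h hh
    have hg' : g ∈ ((P : Set H) * (Subgroup.center H : Set H)) := by
      rw [← Subgroup.mul_normal]; exact h1 hg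
    have hh' : h ∈ ((P : Set H) * (Subgroup.center H : Set H)) := by
      rw [← Subgroup.mul_normal]; exact h1 hh
    obtain ⟨p, hp, z, hz, rfl⟩ := hg'
    obtain ⟨q, hq, w, hw, rfl⟩ := hh'
    rw [commutator_mul_center_aux p q hz hw, commutatorElement_def]
    exact P.mul_mem (P.mul_mem (P.mul_mem hp hq) (P.inv_mem hp)) (P.inv_mem hq)
  -- Step 3: Q ≤ ⁅Q, Q⁆
  have h3 : Q ≤ ⁅Q, Q⁆ := by
    have := congrArg (Subgroup.map Q.subtype) hQ
    rw [commutator, Subgroup.map_commutator, ← MonoidHom.range_eq_map,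
      Subgroup.range_subtype] at this
    exact this.symm.le
  exact le_trans h3 h2
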